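/- Let A be a commutative ring, 𝔞 a finitely generated ideal, M an A-module with 𝔞-adic completion M̂, and Z a set. For every k ≥ 0, the canonical homomorphism A/𝔞^{k+1} ⊗_A F_dec(Z, M̂) → F_fin(Z, A/𝔞^{k+1} ⊗_A M) is bijective, where F_dec(Z, M̂) is the module of 𝔞-adically decaying functions Z → M̂ and F_fin denotes finitely supported functions. -/

import Mathlib

open AdicCompletion

section Aux

variable {A : Type*} [CommRing A] {M : Type*} [AddCommGroup M] [Module A M]

/-- Decomposition lemma: elements of `span(range t) • P` are sums `∑ tᵢ • mᵢ` with `mᵢ ∈ P`. -/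
lemma span_smul_decomp {ι : Type*} [Fintype ι] (t : ι → A) (P : Submodule A M) {x : M}
    (hx : x ∈ Ideal.span (Set.range t) • P) :
    ∃ m : ι → M, (∀ i, m i ∈ P) ∧ x = ∑ i, t i • m i := by
  refine Submodule.smul_induction_on hx ?_ ?_
  · intro r hr p hp
    obtain ⟨c, hc⟩ := (Submodule.mem_span_range_iff_exists_fun A).1 hr
    refine ⟨fun i => c i • p, fun i => P.smul_mem _ hp, ?_⟩
    rw [← hc, Finset.sum_smul]
    exact Finset.sum_congr rfl fun i _ => by rw [smul_smul, smul_eq_mul, mul_comm]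
  · rintro x y ⟨m, hm, rfl⟩ ⟨m', hm', rfl⟩
    exact ⟨m + m', fun i => P.add_mem (hm i) (hm' i), by
      rw [← Finset.sum_add_distrib]
      exact Finset.sum_congr rfl fun i _ => (smul_add _ _ _).symm⟩

lemma eval_eq_zero (a : Ideal A) (n : ℕ) {x : AdicCompletion a M}
    (hx : x ∈ (a ^ n • ⊤ : Submodule A (AdicCompletion a M))) :
    AdicCompletion.eval a M n x = 0 := by
  refine Submodule.smul_induction_on hx ?_ ?_
  · intro r hr y _
    obtain ⟨m, hm⟩ := Submodule.Quotient.mk_surjective _ (eval a M n y)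
    rw [map_smul, ← hm, ← Submodule.Quotient.mk_smul,
      Submodule.Quotient.mk_eq_zero]
    exact Submodule.smul_mem_smul hr Submodule.mem_top
  · intro x y hx hy
    rw [map_add, hx, hy, add_zero]

end Aux

section KerEval

variable {A : Type*} [CommRing A] {M : Type*} [AddCommGroup M] [Module A M]

lemma mem_pow_smul_top_of_eval_eq_zero (a : Ideal A) (ha : a.FG) (n : ℕ)
    {x : AdicCompletion a M} (hx : AdicCompletion.eval a M n x = 0) :
    x ∈ (a ^ n • ⊤ : Submodule A (AdicCompletion a M)) := by
  obtain ⟨S, hS⟩ := Submodule.FG.pow ha n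
  set t : (↥S : Type _) → A := Subtype.val with ht
  have htr : Ideal.span (Set.range t) = a ^ n := by
    rw [ht, Subtype.range_coe_subtype]; exact hS
  obtain ⟨f, rfl⟩ := AdicCompletion.mk_surjective a M x
  have h0 : f.1 n ∈ Ideal.span (Set.range t) • (⊤ : Submodule A M) := by
    rw [htr]
    rw [AdicCompletion.eval_apply, AdicCompletion.mk_apply_coe, Submodule.mkQ_apply,
      Submodule.Quotient.mk_eq_zero] at hx
    simpa using hx
  have hdiff : ∀ m : ℕ, f.1 (n + m + 1) - f.1 (n + m) ∈
      Ideal.span (Set.range t) • ((a ^ m • ⊤ : Submodule A M)) := by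
    intro m
    have h1 : f.1 (n + m) - f.1 (n + m + 1) ∈ ((a ^ (n + m)) • ⊤ : Submodule A M) :=
      (SModEq.sub_mem).1 (f.property (Nat.le_succ (n + m)))
    have h2 : f.1 (n + m + 1) - f.1 (n + m) ∈ ((a ^ (n + m)) • ⊤ : Submodule A M) := by
      simpa using Submodule.neg_mem _ h1
    rwa [pow_add, ← Ideal.smul_eq_mul, Submodule.smul_assoc, ← htr] at h2
  choose d hd1 hd2 using fun m => span_smul_decomp t (a ^ m • ⊤) (hdiff m)
  obtain ⟨e, -, he⟩ := span_smul_decomp t ⊤ h0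
  set w : ↥S → ℕ → M := fun i m => e i + ∑ l ∈ Finset.range m, d l i with hw
  have hsum : ∀ m : ℕ, ∑ i, t i • w i m = f.1 (n + m) := by
    intro m
    induction m with
    | zero => simpa [hw] using he.symm
    | succ m ih =>
        have : ∀ i, w i (m + 1) = w i m + d m i := by
          intro i; simp [hw, Finset.sum_range_succ, add_assoc]
        simp only [this, smul_add, Finset.sum_add_distrib, ih, ← hd2 m]
        show _ = f.1 (n + m + 1)
        abel
  have hcau : ∀ i : ↥S, ∀ m : ℕ, w i m ≡ w i (m + 1) [SMOD (a ^ m • ⊤ : Submodule A M)] := by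
    intro i m
    rw [SModEq.sub_mem]
    have : w i m - w i (m + 1) = -(d m i) := by
      simp [hw, Finset.sum_range_succ]
    rw [this]
    exact Submodule.neg_mem _ (hd1 m i)
  set wseq : ↥S → AdicCauchySequence a M := fun i =>
    AdicCauchySequence.mk a M (w i) (hcau i) with hwseq
  have hkey : AdicCompletion.mk a M f = ∑ i, t i • AdicCompletion.mk a M (wseq i) := by
    refine AdicCompletion.ext fun m => ?_
    rw [AdicCompletion.val_sum_apply]
    have : ∀ i : ↥S, (t i • AdicCompletion.mk a M (wseq i)).val m =
        Submodule.mkQ (a ^ m • ⊤ : Submodule A M) (t i • w i m) := by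
      intro i
      rw [AdicCompletion.val_smul_apply, AdicCompletion.mk_apply_coe, ← map_smul]
      rfl
    rw [Finset.sum_congr rfl fun i _ => this i, ← map_sum, hsum m,
      AdicCompletion.mk_apply_coe, Submodule.mkQ_apply, Submodule.mkQ_apply]
    have hm := f.property (Nat.le_add_left m n)
    rwa [SModEq.def] at hm
  rw [hkey]
  refine Submodule.sum_mem _ fun i _ => Submodule.smul_mem_smul ?_ Submodule.mem_top
  rw [← hS]
  exact Submodule.subset_span i.2

end KerEval



/-- The submodule of finitely supported functions `F_fin(Z, N) ⊆ F(Z, N)`. -/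
def finSuppFns (A : Type*) [CommRing A] (Z : Type*) (N : Type*)
    [AddCommGroup N] [Module A N] : Submodule A (Z → N) where
  carrier := { g | (Function.support g).Finite }
  add_mem' := fun hf hg => Set.Finite.subset (hf.union hg) (Function.support_add _ _)
  zero_mem' := by simp
  smul_mem' := fun r g hg => hg.subset fun z hz => by
    simp only [Function.mem_support] at hz ⊢
    intro h
    apply hz
    show r • g z = 0
    rw [h, smul_zero]

/-- The submodule `F_dec(Z, M̂)` of `𝔞`-adically decaying functions `Z → M̂`, where
`M̂` is the `𝔞`-adic completion of `M`: functions `f` such that for every `k` the set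
`{z | f z ∉ 𝔞^{k+1}·M̂}` is finite. -/
noncomputable def decayingFns {A : Type*} [CommRing A] (a : Ideal A) (Z : Type*) (M : Type*)
    [AddCommGroup M] [Module A M] : Submodule A (Z → AdicCompletion a M) where
  carrier := { f | ∀ k : ℕ,
    { z | f z ∉ (a ^ (k + 1) • ⊤ : Submodule A (AdicCompletion a M)) }.Finite }
  add_mem' := fun {f g} hf hg k => by
    refine ((hf k).union (hg k)).subset fun z hz => ?_
    by_contra h
    simp only [Set.mem_union, Set.mem_setOf_eq, not_or, not_not] at h
    exact hz (Submodule.add_mem _ h.1 h.2)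
  zero_mem' := fun k =>
    Set.finite_empty.subset fun z hz => (hz (Submodule.zero_mem _)).elim
  smul_mem' := fun r f hf k => by
    refine (hf k).subset fun z hz => ?_
    intro h
    exact hz (Submodule.smul_mem _ r h)

/-- The canonical map `F_dec(Z, M̂) → F(Z, M/𝔞^{k+1}M)`, post-composition with the
evaluation `M̂ → M/𝔞^{k+1}M`. -/
noncomputable def decayingEval {A : Type*} [CommRing A] (a : Ideal A) (Z : Type*) (M : Type*)
    [AddCommGroup M] [Module A M] (k : ℕ) :
    (↥(decayingFns a Z M)) →ₗ[A] (Z → M ⧸ (a ^ (k + 1) • ⊤ : Submodule A M)) where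
  toFun f z := AdicCompletion.eval a M (k + 1) (f.1 z)
  map_add' f g := funext fun z => by simp
  map_smul' r f := funext fun z => by simp

/-- For a finitely generated ideal `𝔞` and any `A`-module `M` with `𝔞`-adic completion
`M̂`, the canonical homomorphism `A/𝔞^{k+1} ⊗_A F_dec(Z, M̂) → F_fin(Z, A/𝔞^{k+1} ⊗_A M)`
is bijective; equivalently, the canonical map `F_dec(Z, M̂) → F(Z, M/𝔞^{k+1}M)` has
image exactly the finitely supported functions and kernel `𝔞^{k+1}·F_dec(Z, M̂)`. -/
theorem decaying_base_change_bijective {A : Type*} [CommRing A] (a : Ideal A) (ha : a.FG)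
    (Z : Type*) (M : Type*) [AddCommGroup M] [Module A M] (k : ℕ) :
    LinearMap.range (decayingEval a Z M k) =
      finSuppFns A Z (M ⧸ (a ^ (k + 1) • ⊤ : Submodule A M)) ∧
    LinearMap.ker (decayingEval a Z M k) =
      (a ^ (k + 1)) • (⊤ : Submodule A (↥(decayingFns a Z M))) := by
  classical
  have hmono : ∀ {p q : ℕ}, p ≤ q →
      (a ^ q • ⊤ : Submodule A (AdicCompletion a M)) ≤ a ^ p • ⊤ :=
    fun h => Submodule.smul_mono_left (Ideal.pow_le_pow_right h)
  constructor
  · apply le_antisymm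
    · rintro g ⟨f, rfl⟩
      show (Function.support _).Finite
      refine (f.2 k).subset fun z hz => ?_
      simp only [Function.mem_support] at hz
      show f.1 z ∉ _
      intro hmem
      exact hz (eval_eq_zero a (k + 1) hmem)
    · intro g hg
      have hg' : (Function.support g).Finite := hg
      set m : Z → M := fun z =>
        if h : g z = 0 then 0 else (Submodule.Quotient.mk_surjective _ (g z)).choose with hm
      have hmz : ∀ z, Submodule.Quotient.mk (m z) = g z := by
        intro z
        by_cases h : g z = 0
        · simp [hm, h]
        · simp only [hm, dif_neg h]
          exact (Submodule.Quotient.mk_surjective _ (g z)).choose_spec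
      set f0 : Z → AdicCompletion a M := fun z => AdicCompletion.of a M (m z) with hf0
      have hdec : f0 ∈ decayingFns a Z M := by
        intro k'
        refine hg'.subset fun z hz => ?_
        simp only [Set.mem_setOf_eq] at hz
        simp only [Function.mem_support]
        intro h
        apply hz
        simp [hf0, hm, h]
      refine ⟨⟨f0, hdec⟩, funext fun z => ?_⟩
      show AdicCompletion.eval a M (k + 1) (AdicCompletion.of a M (m z)) = g z
      rw [AdicCompletion.eval_of, Submodule.mkQ_apply, hmz]
  · apply le_antisymm
    · intro x hx
      rw [LinearMap.mem_ker] at hx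
      have hxz : ∀ z, AdicCompletion.eval a M (k + 1) (x.1 z) = 0 := fun z => congrFun hx z
      have hmem : ∀ z, x.1 z ∈ (a ^ (k + 1) • ⊤ : Submodule A (AdicCompletion a M)) :=
        fun z => mem_pow_smul_top_of_eval_eq_zero a ha (k + 1) (hxz z)
      obtain ⟨S, hS⟩ := Submodule.FG.pow ha (k + 1)
      set t : (↥S : Type _) → A := Subtype.val with ht
      have htr : Ideal.span (Set.range t) = a ^ (k + 1) := by
        rw [ht, Subtype.range_coe_subtype]; exact hS
      have key : ∀ z : Z, ∃ mz : ↥S → AdicCompletion a M,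
          (x.1 z = ∑ i, t i • mz i) ∧
          ∀ j : ℕ, x.1 z ∈ (a ^ (k + 2 + j) • ⊤ : Submodule A (AdicCompletion a M)) →
            ∀ i, mz i ∈ (a ^ (j + 1) • ⊤ : Submodule A (AdicCompletion a M)) := by
        intro z
        by_cases h0 : x.1 z = 0
        · exact ⟨0, by simp [h0], fun j _ i => Submodule.zero_mem _⟩
        · have hbnd : ∃ j : ℕ,
              x.1 z ∉ (a ^ (k + 2 + j) • ⊤ : Submodule A (AdicCompletion a M)) := by
            by_contra hall
            push_neg at hall
            refine h0 (IsHausdorff.haus (inferInstance :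
              IsHausdorff a (AdicCompletion a M)) (x.1 z) fun n => ?_)
            rw [SModEq.zero]
            exact hmono (by omega) (hall n)
          have hin : x.1 z ∈
              (a ^ (k + 1 + Nat.find hbnd) • ⊤ : Submodule A (AdicCompletion a M)) := by
            rcases Nat.eq_zero_or_pos (Nat.find hbnd) with h | h
            · rw [h]
              exact hmem z
            · have h1 := Nat.find_min hbnd (m := Nat.find hbnd - 1) (by omega)
              rw [not_not] at h1
              have heq : k + 2 + (Nat.find hbnd - 1) = k + 1 + Nat.find hbnd := by omega
              rwa [heq] at h1
          have hin' : x.1 z ∈ Ideal.span (Set.range t) •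
              ((a ^ (Nat.find hbnd) • ⊤ : Submodule A (AdicCompletion a M))) := by
            rw [pow_add, ← Ideal.smul_eq_mul, Submodule.smul_assoc] at hin
            rwa [htr]
          obtain ⟨mz, hm1, hm2⟩ := span_smul_decomp t _ hin'
          refine ⟨mz, hm2, fun j hj i => ?_⟩
          have hlt : j < Nat.find hbnd := by
            by_contra hc
            push_neg at hc
            exact (Nat.find_spec hbnd) (hmono (by omega) hj)
          exact hmono (by omega) (hm1 i)
      choose mfun hsum hctrl using key
      have hdec : ∀ i : ↥S, (fun z => mfun z i) ∈ decayingFns a Z M := by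
        intro i k'
        refine (x.2 (k + k' + 1)).subset fun z hz => ?_
        simp only [Set.mem_setOf_eq] at hz ⊢
        intro hmem2
        apply hz
        have heq : k + k' + 1 + 1 = k + 2 + k' := by omega
        rw [heq] at hmem2
        exact hctrl z k' hmem2 i
      set mm : ↥S → (decayingFns a Z M) := fun i => ⟨fun z => mfun z i, hdec i⟩ with hmm
      have hx_eq : x = ∑ i, t i • mm i := by
        apply Subtype.ext
        have hcoe : ((∑ i, t i • mm i : decayingFns a Z M) : Z → AdicCompletion a M)
            = ∑ i, t i • (fun z => mfun z i) := by
          simp only [AddSubmonoidClass.coe_finset_sum, SetLike.val_smul]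
          rfl
        rw [hcoe]
        funext z
        rw [Finset.sum_apply]
        exact hsum z
      rw [hx_eq]
      refine Submodule.sum_mem _ fun i _ => Submodule.smul_mem_smul ?_ Submodule.mem_top
      rw [← hS]
      exact Submodule.subset_span i.2
    · intro x hx
      rw [LinearMap.mem_ker]
      refine Submodule.smul_induction_on hx ?_ ?_
      · intro r hr f _
        funext z
        show AdicCompletion.eval a M (k + 1) ((r • f).1 z) = 0
        have : (r • f).1 z = r • f.1 z := rfl
        rw [this]
        exact eval_eq_zero a (k + 1)
          (Submodule.smul_mem_smul hr Submodule.mem_top)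
      · intro u v hu hv
        rw [map_add, hu, hv, add_zero]
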